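/- Let S_1, …, S_n be a row isometry on a complex Hilbert space H, let N ⊆ H be a closed subspace that is coinvariant for each S_j, and let P be the orthogonal projection onto N. Assume the compressions U_j = P S_j|_N form a spherical unitary on N (pairwise commuting normal operators with ∑_{j=1}^n U_j U_j* = I_N). If Y is a bounded operator on H commuting with every S_j, then the operator A = P Y P satisfies ∑_{j=1}^n (P S_j P) A (P S_j* P) = A; that is, the compression of Y to N satisfies ∑_{j=1}^n U_j (P Y|_N) U_j* = P Y|_N. -/

import Mathlib

open ContinuousLinearMap in
/-- From the proof of Lemma 3.3 of Davidson–Le: if `S` is a row isometry, `N` a coinvariant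
closed subspace whose compressions `Uⱼ = P Sⱼ|_N` form a spherical unitary, and `Y` commutes
with every `Sⱼ`, then the compression `A = P Y P` satisfies `∑ (P Sⱼ P) A (P Sⱼ* P) = A`,
i.e. `∑ Uⱼ (P Y|_N) Uⱼ* = P Y|_N`. -/
theorem compression_is_harmonic_for_spherical_unitary
    {H : Type*} [NormedAddCommGroup H] [InnerProductSpace ℂ H] [CompleteSpace H]
    {n : ℕ} (S : Fin n → H →L[ℂ] H)
    (hrow : ∀ i j, star (S i) * S j = if i = j then 1 else 0)
    (N : Submodule ℂ H) [CompleteSpace N]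
    (hcoinv : ∀ j, ∀ x ∈ N, adjoint (S j) x ∈ N)
    -- the compressions `Uⱼ = P_N Sⱼ|_N` :
    (U : Fin n → N →L[ℂ] N)
    (hU : ∀ j, U j = N.orthogonalProjectionOnto ∘L (S j) ∘L N.subtypeL)
    -- `U` is a spherical unitary :
    (hUcomm : ∀ i j, U i * U j = U j * U i)
    (hUnormal : ∀ i, U i * star (U i) = star (U i) * U i)
    (hUsum : ∑ j, U j * star (U j) = 1)
    (Y : H →L[ℂ] H)
    (hY : ∀ j, Y * S j = S j * Y) :
    let P : H →L[ℂ] H := N.subtypeL ∘L N.orthogonalProjectionOnto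
    ∑ j, (P ∘L S j ∘L P) ∘L (P ∘L Y ∘L P) ∘L (P ∘L star (S j) ∘L P)
      = P ∘L Y ∘L P := by
  intro P
  have hPsa : IsSelfAdjoint P := isSelfAdjoint_starProjection N
  have hPmem : ∀ x ∈ N, P x = x := by
    intro x hx
    exact N.starProjection_eq_self_iff.mpr hx
  have hPmemN : ∀ x : H, P x ∈ N := fun x => (N.orthogonalProjectionOnto x).2
  have hPP : P * P = P := by
    ext x
    exact hPmem _ (hPmemN x)
  -- coinvariance in operator form
  have hco : ∀ j, P * star (S j) * P = star (S j) * P := by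
    intro j
    ext x
    simp only [mul_def, comp_apply]
    refine hPmem _ ?_
    rw [star_eq_adjoint]
    exact hcoinv j _ (hPmemN x)
  have hco' : ∀ j, P * S j * P = P * S j := by
    intro j
    have h := congrArg star (hco j)
    simpa [star_mul, hPsa.star_eq, mul_assoc] using h
  -- star of U j
  have hUstar : ∀ j, star (U j)
      = (N.orthogonalProjectionOnto) ∘L (adjoint (S j)) ∘L N.subtypeL := by
    intro j
    rw [star_eq_adjoint, hU j, adjoint_comp, adjoint_comp,
      Submodule.adjoint_subtypeL, Submodule.adjoint_orthogonalProjectionOnto]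
    rfl
  -- the spherical unitary identity transported to H
  have key : ∀ j, N.subtypeL ∘L ((U j * star (U j)) : N →L[ℂ] N) ∘L N.orthogonalProjectionOnto
      = P * (S j * star (S j)) * P := by
    intro j
    have h1 : N.subtypeL ∘L ((U j * star (U j)) : N →L[ℂ] N) ∘L N.orthogonalProjectionOnto
        = P * S j * P * star (S j) * P := by
      ext x
      simp [mul_def, hU j, hUstar j, P, star_eq_adjoint,
        Submodule.adjoint_subtypeL, Submodule.adjoint_orthogonalProjectionOnto]
    rw [h1, hco' j, mul_assoc P (S j) (star (S j))]
  have hPEP : P * (∑ j, S j * star (S j)) * P = P := by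
    calc P * (∑ j, S j * star (S j)) * P
        = ∑ j, P * (S j * star (S j)) * P := by
          rw [Finset.mul_sum, Finset.sum_mul]
      _ = ∑ j, N.subtypeL ∘L ((U j * star (U j)) : N →L[ℂ] N) ∘L N.orthogonalProjectionOnto := by
          simp only [key]
      _ = N.subtypeL ∘L ((∑ j, U j * star (U j)) : N →L[ℂ] N) ∘L N.orthogonalProjectionOnto := by
          ext x
          simp
      _ = P := by
          rw [hUsum]
          rfl
  set E : H →L[ℂ] H := ∑ j, S j * star (S j) with hE
  have hEsa : IsSelfAdjoint E := by
    simp [IsSelfAdjoint, hE, star_sum, star_mul]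
  have hEE : E * E = E := by
    have hterm : ∀ i j : Fin n, (S i * star (S i)) * (S j * star (S j))
        = if i = j then S i * star (S j) else 0 := by
      intro i j
      have h := hrow i j
      calc (S i * star (S i)) * (S j * star (S j))
          = S i * (star (S i) * S j) * star (S j) := by
            simp [mul_assoc]
        _ = _ := by rw [h]; split <;> simp
    rw [hE, Finset.sum_mul_sum]
    simp only [hterm]
    simp
  -- 1 - E is a self-adjoint idempotent killed by compression to N, hence kills P
  have hQ : (1 - E) * P = 0 := by
    have hstar : star ((1 - E) * P) = P * (1 - E) := by
      simp [star_mul, hEsa.star_eq, hPsa.star_eq]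
    have h1 : star ((1 - E) * P) * ((1 - E) * P) = 0 := by
      rw [hstar]
      calc P * (1 - E) * ((1 - E) * P)
          = P * ((1 - E) * (1 - E)) * P := by
            simp only [mul_assoc]
        _ = P * (1 - E) * P := by
            congr 2
            simp [sub_mul, mul_sub, hEE]
        _ = 0 := by
            simp [mul_sub, sub_mul, hPP, hPEP]
    exact (CStarRing.star_mul_self_eq_zero_iff _).mp h1
  have hEP : E * P = P := by
    have := hQ
    rw [sub_mul, one_mul, sub_eq_zero] at this
    exact this.symm
  -- final computation
  have hterm2 : ∀ j, (P ∘L S j ∘L P) ∘L (P ∘L Y ∘L P) ∘L (P ∘L star (S j) ∘L P)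
      = P * Y * (S j * star (S j)) * P := by
    intro j
    have e1 : (P ∘L S j ∘L P) ∘L (P ∘L Y ∘L P) ∘L (P ∘L star (S j) ∘L P)
        = P * S j * (P * P) * Y * (P * P) * star (S j) * P := by
      simp only [← mul_def, mul_assoc]
    rw [e1, hPP]
    have e2 : P * S j * P * Y * P * star (S j) * P
        = P * S j * P * Y * (P * star (S j) * P) := by
      simp only [mul_assoc]
    rw [e2, hco j, hco' j]
    have e3 : P * S j * Y * (star (S j) * P) = P * (S j * Y) * star (S j) * P := by
      simp only [mul_assoc]
    rw [e3, ← hY j]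
    simp only [mul_assoc]
  calc ∑ j, (P ∘L S j ∘L P) ∘L (P ∘L Y ∘L P) ∘L (P ∘L star (S j) ∘L P)
      = ∑ j, P * Y * (S j * star (S j)) * P := by
        simp only [hterm2]
    _ = P * Y * E * P := by
        rw [hE, Finset.mul_sum, Finset.sum_mul]
    _ = P * Y * P := by
        rw [mul_assoc, hEP]
    _ = P ∘L Y ∘L P := by
        rw [mul_assoc]; rfl
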